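/- Let (T,a) be a Turing machine with advice a = {a_n}, where a_n ∈ Σ^{p(n)} for an increasing function p, the first symbol of each advice string a_n is 0, and inputs of size n are tapes (...0.t_0...t_n 0...) with t_i ≠ 0 for 0 ≤ i ≤ n. Consider the countable generalized shift pairs P₁ = {(−1, (d q_0 t_0...t_n d 0^{p(n)−1})) : n ∈ ℕ, t_i ≠ 0}, over alphabet A = Q ∪ Σ ∪ {d}, with J((−1, (d q_0 t_0...t_n d 0^{p(n)−1}))) = (0 q_0 t_0...t_n a_1^n...a_{p(n)}^n) and H ≡ 0. Then the induced map on S_{P₁} is injective: distinct sequences in S_{P₁} have distinct images. -/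

import Mathlib

/-- `s` coincides with the pair `p = (n, I)` if the symbols of `s` at positions
`n, ..., n + |I| - 1` form the word `I`. -/
def Coincides {A : Type*} (s : ℤ → A) (p : ℤ × List A) : Prop :=
  ∀ (i : ℕ) (hi : i < p.2.length), s (p.1 + i) = p.2.get ⟨i, hi⟩

/-- The set of sequences coinciding with some pair of `P`. -/
def SP {A : Type*} (P : Set (ℤ × List A)) : Set (ℤ → A) :=
  {s | ∃ p ∈ P, Coincides s p}

/-- Every sequence coincides with at most one pair of `P`
(the defining condition of a countable generalized shift). -/
def AtMostOne {A : Type*} (P : Set (ℤ × List A)) : Prop :=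
  ∀ s : ℤ → A, ∀ p ∈ P, ∀ q ∈ P, Coincides s p → Coincides s q → p = q

/-- Replace the symbols of `s` at positions `n, ..., n + |w| - 1` by the word `w`. -/
noncomputable def replaceWord {A : Type*} (s : ℤ → A) (n : ℤ) (w : List A) : ℤ → A :=
  fun k => if h : 0 ≤ k - n ∧ (k - n).toNat < w.length
    then w.get ⟨(k - n).toNat, h.2⟩ else s k

open scoped Classical in
/-- The countable generalized shift determined by the data `(P, J, H)`: if `s`
coincides with a (necessarily unique, when `AtMostOne P` holds) pair `p ∈ P`, replace
the word of `p` in `s` by `J p` and shift by `H p` (position `k` of the image is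
position `k + H p` of the replaced sequence); otherwise leave `s` unchanged. -/
noncomputable def cgsApply {A : Type*} (P : Set (ℤ × List A)) (J : ℤ × List A → List A)
    (H : ℤ × List A → ℤ) (s : ℤ → A) : ℤ → A :=
  if h : ∃ p ∈ P, Coincides s p then
    fun k => replaceWord s h.choose.1 (J h.choose) (k + H h.choose)
  else s

/-- The pairs `P₁` of the advice-loading step: over the alphabet
`A = Q ⊕ (Σ ⊕ {d})` (with `d` the fresh marker), for each `n` and each input word
`t₀...tₙ` of nonblank symbols, the pair
`(-1, (d q₀ t₀...tₙ d 0^{p(n)-1}))`. -/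
def advicePairs {Q S : Type*} (q0 : Q) (zero : S) (p : ℕ → ℕ) :
    Set (ℤ × List (Q ⊕ (S ⊕ Unit))) :=
  {pr | ∃ (n : ℕ) (t : List S), t.length = n + 1 ∧ (∀ x ∈ t, x ≠ zero) ∧
    pr = (-1,
      [Sum.inr (Sum.inr ()), Sum.inl q0]
        ++ t.map (fun x => Sum.inr (Sum.inl x))
        ++ [Sum.inr (Sum.inr ())]
        ++ List.replicate (p n - 1) (Sum.inr (Sum.inl zero)))}

/-- auxiliary: the word of a pair in `P₁`. -/
def wW {Q S : Type*} (q0 : Q) (zero : S) (p : ℕ → ℕ) (n : ℕ) (t : List S) :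
    List (Q ⊕ (S ⊕ Unit)) :=
  [Sum.inr (Sum.inr ()), Sum.inl q0]
    ++ t.map (fun x => Sum.inr (Sum.inl x))
    ++ [Sum.inr (Sum.inr ())]
    ++ List.replicate (p n - 1) (Sum.inr (Sum.inl zero))

/-- auxiliary: the image word `J` of a pair. -/
def vW {Q S : Type*} (q0 : Q) (zero : S) (a : ℕ → List S) (n : ℕ) (t : List S) :
    List (Q ⊕ (S ⊕ Unit)) :=
  [Sum.inr (Sum.inl zero), Sum.inl q0]
    ++ t.map (fun x => Sum.inr (Sum.inl x))
    ++ (a n).map (fun x => Sum.inr (Sum.inl x))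

lemma vW_len {Q S : Type*} (q0 : Q) (zero : S) (a : ℕ → List S) (n : ℕ) (t : List S) :
    (vW q0 zero a n t).length = 2 + t.length + (a n).length := by
  simp [vW]; omega

lemma wW_len {Q S : Type*} (q0 : Q) (zero : S) (p : ℕ → ℕ) (n : ℕ) (t : List S) :
    (wW q0 zero p n t).length = 3 + t.length + (p n - 1) := by
  simp [wW]; omega

lemma vW_get_t {Q S : Type*} (q0 : Q) (zero : S) (a : ℕ → List S) (n : ℕ) (t : List S)
    (i : ℕ) (hi : i < t.length) (hm : i + 2 < (vW q0 zero a n t).length) :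
    (vW q0 zero a n t).get ⟨i + 2, hm⟩ = Sum.inr (Sum.inl (t.get ⟨i, hi⟩)) := by
  rw [List.get_eq_getElem, List.get_eq_getElem]
  simp [vW, List.getElem_append, hi]

lemma vW_get_a0 {Q S : Type*} (q0 : Q) (zero : S) (a : ℕ → List S) (n : ℕ) (t : List S)
    (hl : t.length = n + 1) (hpn : 0 < (a n).length)
    (hm : n + 3 < (vW q0 zero a n t).length) :
    (vW q0 zero a n t).get ⟨n + 3, hm⟩ = Sum.inr (Sum.inl ((a n).get ⟨0, hpn⟩)) := by
  rw [List.get_eq_getElem, List.get_eq_getElem]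
  simp [vW, List.getElem_append, hl]

lemma get_congr {A : Type*} (l : List A) {i j : ℕ} (hij : i = j)
    (h : i < l.length) (h' : j < l.length) : l.get ⟨i, h⟩ = l.get ⟨j, h'⟩ := by
  subst hij; rfl

lemma repl_get {A : Type*} (s : ℤ → A) (w : List A) (m : ℕ) (hm : m < w.length) :
    replaceWord s (-1) w ((m : ℤ) - 1) = w.get ⟨m, hm⟩ := by
  unfold replaceWord
  rw [dif_pos ⟨by omega, by omega⟩]
  exact get_congr w (by omega) _ hm

lemma repl_out {A : Type*} (s : ℤ → A) (w : List A) (k : ℤ)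
    (hk : k < -1 ∨ (w.length : ℤ) - 1 ≤ k) : replaceWord s (-1) w k = s k := by
  unfold replaceWord
  rw [dif_neg]
  rintro ⟨h1, h2⟩
  omega

/-- If the images agree and `n1 < n2`, contradiction. -/
lemma advice_key_lt {Q S : Type*} (q0 : Q) (zero : S)
    (p : ℕ → ℕ) (hp1 : ∀ n, 1 ≤ p n)
    (a : ℕ → List S) (ha : ∀ n, (a n).length = p n)
    (ha0 : ∀ n, (a n).head? = some zero)
    (s1 s2 : ℤ → (Q ⊕ (S ⊕ Unit)))
    (n1 n2 : ℕ) (t1 t2 : List S) (hl1 : t1.length = n1 + 1) (hl2 : t2.length = n2 + 1)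
    (hne2 : ∀ x ∈ t2, x ≠ zero) (hlt : n1 < n2)
    (key : ∀ k, replaceWord s1 (-1) (vW q0 zero a n1 t1) k
      = replaceWord s2 (-1) (vW q0 zero a n2 t2) k) : False := by
  have hb1 : n1 + 3 < (vW q0 zero a n1 t1).length := by
    rw [vW_len, hl1, ha]; have := hp1 n1; omega
  have hb2 : n1 + 3 < (vW q0 zero a n2 t2).length := by
    rw [vW_len, hl2, ha]; have := hp1 n2; omega
  have hi : n1 + 1 < t2.length := by omega
  have h0 : 0 < (a n1).length := by rw [ha]; exact hp1 n1
  have hk := key (((n1 + 3 : ℕ) : ℤ) - 1)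
  rw [repl_get s1 _ (n1 + 3) hb1, repl_get s2 _ (n1 + 3) hb2] at hk
  have e1 : (vW q0 zero a n1 t1).get ⟨n1 + 3, hb1⟩
      = Sum.inr (Sum.inl ((a n1).get ⟨0, h0⟩)) := vW_get_a0 q0 zero a n1 t1 hl1 h0 hb1
  have e2 : (vW q0 zero a n2 t2).get ⟨n1 + 1 + 2, hb2⟩
      = Sum.inr (Sum.inl (t2.get ⟨n1 + 1, hi⟩)) := vW_get_t q0 zero a n2 t2 (n1 + 1) hi hb2
  have ez : (a n1).get ⟨0, h0⟩ = zero := by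
    have h' := ha0 n1
    rw [List.head?_eq_head (List.length_pos_iff.mp h0)] at h'
    rw [List.get_eq_getElem, List.getElem_zero]
    exact Option.some_injective _ h'
  rw [e1, ez, get_congr (vW q0 zero a n2 t2) (show n1 + 3 = n1 + 1 + 2 by omega) hb2
    (by omega), e2] at hk
  have hz : zero = t2.get ⟨n1 + 1, hi⟩ := by simpa using hk
  exact hne2 _ (List.get_mem _ _) hz.symm

/-- The advice-loading countable generalized shift, with
`J((-1, d q₀ t₀...tₙ d 0^{p(n)-1})) = (0 q₀ t₀...tₙ a₁ⁿ...a_{p(n)}ⁿ)` and no shift,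
is injective on `S_{P₁}`: here `p` is increasing with `p n ≥ 1`, the advice string
`a n` has length `p n` and first symbol the blank `0`, and input symbols are
nonblank. -/
theorem advice_cgs_injective {Q S : Type*} (q0 : Q) (zero : S)
    (p : ℕ → ℕ) (hp : StrictMono p) (hp1 : ∀ n, 1 ≤ p n)
    (a : ℕ → List S) (ha : ∀ n, (a n).length = p n)
    (ha0 : ∀ n, (a n).head? = some zero)
    (J : ℤ × List (Q ⊕ (S ⊕ Unit)) → List (Q ⊕ (S ⊕ Unit)))
    (hJ : ∀ (n : ℕ) (t : List S), t.length = n + 1 → (∀ x ∈ t, x ≠ zero) →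
      J (-1,
        [Sum.inr (Sum.inr ()), Sum.inl q0]
          ++ t.map (fun x => Sum.inr (Sum.inl x))
          ++ [Sum.inr (Sum.inr ())]
          ++ List.replicate (p n - 1) (Sum.inr (Sum.inl zero)))
      = [Sum.inr (Sum.inl zero), Sum.inl q0]
          ++ t.map (fun x => Sum.inr (Sum.inl x))
          ++ (a n).map (fun x => Sum.inr (Sum.inl x))) :
    Set.InjOn (cgsApply (advicePairs q0 zero p) J (fun _ => 0))
      (SP (advicePairs q0 zero p)) := by
  intro s1 hs1 s2 hs2 heq
  have h1 : ∃ pr ∈ advicePairs q0 zero p, Coincides s1 pr := hs1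
  have h2 : ∃ pr ∈ advicePairs q0 zero p, Coincides s2 pr := hs2
  obtain ⟨n1, t1, hl1, hne1, hpr1⟩ := h1.choose_spec.1
  obtain ⟨n2, t2, hl2, hne2, hpr2⟩ := h2.choose_spec.1
  have hc1 : Coincides s1 (-1, wW q0 zero p n1 t1) := by
    have := h1.choose_spec.2; rwa [hpr1] at this
  have hc2 : Coincides s2 (-1, wW q0 zero p n2 t2) := by
    have := h2.choose_spec.2; rwa [hpr2] at this
  have e1 : cgsApply (advicePairs q0 zero p) J (fun _ => 0) s1
      = replaceWord s1 (-1) (vW q0 zero a n1 t1) := by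
    unfold cgsApply
    rw [dif_pos h1, hpr1]
    funext k
    simp only [add_zero]
    rw [hJ n1 t1 hl1 hne1]
    rfl
  have e2 : cgsApply (advicePairs q0 zero p) J (fun _ => 0) s2
      = replaceWord s2 (-1) (vW q0 zero a n2 t2) := by
    unfold cgsApply
    rw [dif_pos h2, hpr2]
    funext k
    simp only [add_zero]
    rw [hJ n2 t2 hl2 hne2]
    rfl
  have key : ∀ k, replaceWord s1 (-1) (vW q0 zero a n1 t1) k
      = replaceWord s2 (-1) (vW q0 zero a n2 t2) k := by
    intro k; rw [← e1, ← e2, heq]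
  -- n1 = n2
  have hnn : n1 = n2 := by
    rcases Nat.lt_trichotomy n1 n2 with h | h | h
    · exact absurd (advice_key_lt q0 zero p hp1 a ha ha0 s1 s2 n1 n2 t1 t2 hl1 hl2 hne2 h key)
        (not_false)
    · exact h
    · exact absurd (advice_key_lt q0 zero p hp1 a ha ha0 s2 s1 n2 n1 t2 t1 hl2 hl1 hne1 h
        (fun k => (key k).symm)) (not_false)
  subst hnn
  -- t1 = t2
  have ht : t1 = t2 := by
    apply List.ext_get (by omega)
    intro i hi1 hi2
    have hb1 : i + 2 < (vW q0 zero a n1 t1).length := by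
      rw [vW_len]; omega
    have hb2 : i + 2 < (vW q0 zero a n1 t2).length := by
      rw [vW_len]; omega
    have hk := key (((i + 2 : ℕ) : ℤ) - 1)
    rw [repl_get s1 _ (i + 2) hb1, repl_get s2 _ (i + 2) hb2,
      vW_get_t q0 zero a n1 t1 i hi1 hb1, vW_get_t q0 zero a n1 t2 i hi2 hb2] at hk
    simpa using hk
  subst ht
  -- now conclude s1 = s2
  funext k
  have hvlen : ((vW q0 zero a n1 t1).length : ℤ) = 2 + t1.length + (a n1).length := by
    rw [vW_len]; push_cast; ring
  by_cases hk : -1 ≤ k ∧ k + 1 < ((wW q0 zero p n1 t1).length : ℤ)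
  · -- inside the replaced region: both coincide with the same word
    obtain ⟨hk1, hk2⟩ := hk
    set i : ℕ := (k + 1).toNat with hidef
    have hi : i < (wW q0 zero p n1 t1).length := by omega
    have hik : (-1 : ℤ) + i = k := by omega
    have a1 := hc1 i hi
    have a2 := hc2 i hi
    simp only at a1 a2
    rw [hik] at a1 a2
    rw [a1, a2]
  · -- outside: both sides of the image agree with s1, s2 respectively
    have hwv : ((wW q0 zero p n1 t1).length : ℤ) = ((vW q0 zero a n1 t1).length : ℤ) := by
      rw [hvlen, wW_len]
      have := hp1 n1
      have := ha n1
      push_cast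
      omega
    have hout : k < -1 ∨ ((vW q0 zero a n1 t1).length : ℤ) - 1 ≤ k := by
      rw [← hwv]; omega
    have hkk := key k
    rw [repl_out s1 _ k hout, repl_out s2 _ k hout] at hkk
    exact hkk
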